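/- For any sublattice S of a nondegenerate even lattice L, every element g of the stable orthogonal group Õ(S) extends (by the identity on S⊥) to an element of the stable orthogonal group Õ(L). In particular Õ(S) embeds as a subgroup of Õ(L). -/

import Mathlib

open Matrix

/-- The subgroup of vectors of `ℚ^ι` with integral coordinates (the lattice `L` inside `L ⊗ ℚ`). -/
def intVecs (ι : Type*) [Fintype ι] : AddSubgroup (ι → ℚ) where
  carrier := {x | ∀ i, ∃ z : ℤ, x i = z}
  add_mem' := by
    intro a b ha hb i
    obtain ⟨z, hz⟩ := ha i
    obtain ⟨w, hw⟩ := hb i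
    exact ⟨z + w, by simp [Pi.add_apply, hz, hw]⟩
  zero_mem' := fun i => ⟨0, by simp⟩
  neg_mem' := by
    intro a ha i
    obtain ⟨z, hz⟩ := ha i
    exact ⟨-z, by simp [Pi.neg_apply, hz]⟩

/-- The dual lattice `L∨ ⊆ L ⊗ ℚ` of the lattice with Gram matrix `B`. -/
def dualLat {ι : Type*} [Fintype ι] (B : Matrix ι ι ℤ) : AddSubgroup (ι → ℚ) where
  carrier := {x | ∀ v : ι → ℤ, ∃ z : ℤ,
    x ⬝ᵥ (B.map (Int.cast : ℤ → ℚ)).mulVec (fun i => (v i : ℚ)) = z}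
  add_mem' := by
    intro a b ha hb v
    obtain ⟨z, hz⟩ := ha v
    obtain ⟨w, hw⟩ := hb v
    exact ⟨z + w, by rw [add_dotProduct, hz, hw]; push_cast; ring⟩
  zero_mem' := fun v => ⟨0, by simp⟩
  neg_mem' := by
    intro a ha v
    obtain ⟨z, hz⟩ := ha v
    exact ⟨-z, by rw [neg_dotProduct, hz]; push_cast; ring⟩

section aux

variable {n : ℕ}

/-- cast pairing lemma -/
lemma castPair (B : Matrix (Fin n) (Fin n) ℤ) (v w : Fin n → ℤ) :
    (fun i => (v i : ℚ)) ⬝ᵥ (B.map (Int.cast : ℤ → ℚ)).mulVec (fun i => (w i : ℚ))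
      = ((v ⬝ᵥ B.mulVec w : ℤ) : ℚ) := by
  simp [dotProduct, mulVec, Matrix.map_apply]

lemma symmQ {B : Matrix (Fin n) (Fin n) ℤ} (hsymm : B.IsSymm) (x y : Fin n → ℚ) :
    x ⬝ᵥ (B.map (Int.cast : ℤ → ℚ)).mulVec y = y ⬝ᵥ (B.map (Int.cast : ℤ → ℚ)).mulVec x := by
  have hs : (B.map (Int.cast : ℤ → ℚ)).IsSymm := by
    rw [Matrix.IsSymm, ← Matrix.transpose_map, hsymm]
  rw [Matrix.dotProduct_mulVec, ← Matrix.mulVec_transpose, hs, dotProduct_comm]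

lemma clearDen (S : Submodule ℤ (Fin n → ℤ)) (x : Fin n → ℚ)
    (hx : x ∈ Submodule.span ℚ ((fun v : Fin n → ℤ => fun i => (v i : ℚ)) '' (S : Set (Fin n → ℤ)))) :
    ∃ (d : ℤ) (t : Fin n → ℤ), d ≠ 0 ∧ t ∈ S ∧ (d : ℚ) • x = fun i => (t i : ℚ) := by
  induction hx using Submodule.span_induction with
  | mem y hy =>
      obtain ⟨s, hs, rfl⟩ := hy
      exact ⟨1, s, one_ne_zero, hs, by norm_num⟩
  | zero => exact ⟨1, 0, one_ne_zero, S.zero_mem, by funext i; simp⟩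
  | add y z hy hz ihy ihz =>
      obtain ⟨d, t, hd, ht, hdt⟩ := ihy
      obtain ⟨e, u, he, hu, heu⟩ := ihz
      refine ⟨d * e, e • t + d • u, mul_ne_zero hd he, S.add_mem (S.smul_mem e ht) (S.smul_mem d hu), ?_⟩
      funext i
      have h1 := congrFun hdt i
      have h2 := congrFun heu i
      simp only [Pi.add_apply, Pi.smul_apply, smul_eq_mul] at h1 h2 ⊢
      push_cast
      linear_combination (e : ℚ) * h1 + (d : ℚ) * h2
  | smul q y hy ihy =>
      obtain ⟨d, t, hd, ht, hdt⟩ := ihy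
      refine ⟨q.den * d, q.num • t, by positivity, S.smul_mem q.num ht, ?_⟩
      funext i
      have h1 := congrFun hdt i
      simp only [Pi.smul_apply, smul_eq_mul] at h1 ⊢
      have hq : (q.den : ℚ) * q = q.num := by
        rw [mul_comm, Rat.mul_den_eq_num]
      push_cast
      calc (q.den : ℚ) * d * (q * y i) = ((q.den:ℚ) * q) * (d * y i) := by ring
        _ = (q.num : ℚ) * (t i : ℚ) := by rw [hq, h1]

end aux

/-- Let `S` be a (nondegenerate) sublattice of a nondegenerate even lattice
`L = ℤ^n`. Any `g ∈ Õ(S)` — an isometry of `S ⊗ ℚ` extended by the identity on the orthogonal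
complement of `S`, preserving `S` and acting trivially on `D(S)` — yields an element of `Õ(L)`:
it preserves `L` (bijectively) and acts trivially on the discriminant group `D(L) = L∨/L`. -/
theorem stmt_6 (n : ℕ) (B : Matrix (Fin n) (Fin n) ℤ)
    (hsymm : B.IsSymm) (hnd : B.det ≠ 0)
    (heven : ∀ v : Fin n → ℤ, Even (v ⬝ᵥ B.mulVec v))
    (S : Submodule ℤ (Fin n → ℤ))
    (hSnd : ∀ s ∈ S, (∀ t ∈ S, s ⬝ᵥ B.mulVec t = 0) → s = 0)
    (g : (Fin n → ℚ) →ₗ[ℚ] (Fin n → ℚ))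
    (hgiso : ∀ x y : Fin n → ℚ,
      g x ⬝ᵥ (B.map (Int.cast : ℤ → ℚ)).mulVec (g y) = x ⬝ᵥ (B.map (Int.cast : ℤ → ℚ)).mulVec y)
    (hgS : ∀ s ∈ S, ∃ s' ∈ S, g (fun i => ((s : Fin n → ℤ) i : ℚ)) = fun i => ((s' : Fin n → ℤ) i : ℚ))
    (hgSsurj : ∀ s ∈ S, ∃ s' ∈ S, g (fun i => ((s' : Fin n → ℤ) i : ℚ)) = fun i => ((s : Fin n → ℤ) i : ℚ))
    (hgperp : ∀ x : Fin n → ℚ,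
      (∀ s ∈ S, x ⬝ᵥ (B.map (Int.cast : ℤ → ℚ)).mulVec (fun i => ((s : Fin n → ℤ) i : ℚ)) = 0) →
      g x = x)
    (hgstab : ∀ x : Fin n → ℚ,
      x ∈ Submodule.span ℚ ((fun v : Fin n → ℤ => fun i => (v i : ℚ)) '' (S : Set (Fin n → ℤ))) →
      (∀ s ∈ S, ∃ z : ℤ,
        x ⬝ᵥ (B.map (Int.cast : ℤ → ℚ)).mulVec (fun i => ((s : Fin n → ℤ) i : ℚ)) = z) →
      ∃ a ∈ S, g x - x = fun i => ((a : Fin n → ℤ) i : ℚ)) :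
    (∀ l : Fin n → ℤ, g (fun i => (l i : ℚ)) ∈ intVecs (Fin n)) ∧
    (∀ l : Fin n → ℤ, ∃ l' : Fin n → ℤ, g (fun i => (l' i : ℚ)) = fun i => (l i : ℚ)) ∧
    (∀ x ∈ dualLat B, g x - x ∈ intVecs (Fin n)) := by
  set Bq := B.map (Int.cast : ℤ → ℚ) with hBq
  set F : LinearMap.BilinForm ℚ (Fin n → ℚ) := Matrix.toBilin' Bq with hF
  have hFapp : ∀ x y, F x y = x ⬝ᵥ Bq.mulVec y := fun x y => Matrix.toBilin'_apply' _ _ _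
  have hrefl : F.IsRefl := by
    intro x y h
    rw [hFapp] at h ⊢
    rw [symmQ hsymm]
    exact h
  set V : Submodule ℚ (Fin n → ℚ) :=
    Submodule.span ℚ ((fun v : Fin n → ℤ => fun i => (v i : ℚ)) '' (S : Set (Fin n → ℤ))) with hV
  -- restriction of F to V is nondegenerate
  have hres : (F.restrict V).Nondegenerate := by
    refine (hrefl.domRestrict V).nondegenerate_iff_separatingLeft.mpr ?_
    rintro ⟨x, hx⟩ h
    obtain ⟨d, t, hd, ht, hdt⟩ := clearDen S x hx
    have ht0 : t = 0 := by
      apply hSnd t ht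
      intro s hs
      have hsV : (fun i => (s i : ℚ)) ∈ V := Submodule.subset_span ⟨s, hs, rfl⟩
      have h1 : F x (fun i => (s i : ℚ)) = 0 := h ⟨_, hsV⟩
      have h2 : F ((d : ℚ) • x) (fun i => (s i : ℚ)) = 0 := by
        rw [_root_.map_smul]; simp [h1]
      rw [hdt, hFapp, castPair] at h2
      exact_mod_cast h2
    have : (d : ℚ) • x = 0 := by rw [hdt, ht0]; funext i; simp
    have hx0 : x = 0 := by
      have hd' : (d : ℚ) ≠ 0 := Int.cast_ne_zero.mpr hd
      exact (smul_eq_zero.mp this).resolve_left hd'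
    exact Subtype.ext hx0
  have hcompl : IsCompl V (F.orthogonal V) :=
    LinearMap.BilinForm.isCompl_orthogonal_of_restrict_nondegenerate hrefl hres
  -- key claim: (3)
  have key : ∀ x ∈ dualLat B, g x - x ∈ intVecs (Fin n) := by
    intro x hx
    have hxtop : x ∈ V ⊔ F.orthogonal V := by rw [hcompl.sup_eq_top]; trivial
    obtain ⟨v, hv, w, hw, hvw⟩ := Submodule.mem_sup.mp hxtop
    have hwperp : ∀ s ∈ S, w ⬝ᵥ Bq.mulVec (fun i => ((s : Fin n → ℤ) i : ℚ)) = 0 := by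
      intro s hs
      have hsV : (fun i => ((s : Fin n → ℤ) i : ℚ)) ∈ V := Submodule.subset_span ⟨s, hs, rfl⟩
      have := hw _ hsV
      rw [hFapp] at this
      rw [symmQ hsymm]
      exact this
    have hgw : g w = w := hgperp w hwperp
    have hvpair : ∀ s ∈ S, ∃ z : ℤ,
        v ⬝ᵥ Bq.mulVec (fun i => ((s : Fin n → ℤ) i : ℚ)) = z := by
      intro s hs
      obtain ⟨z, hz⟩ := hx (s : Fin n → ℤ)
      refine ⟨z, ?_⟩
      have : v = x - w := by rw [← hvw]; ring
      rw [this, sub_dotProduct, hwperp s hs, sub_zero]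
      exact hz
    obtain ⟨a, haS, hga⟩ := hgstab v hv hvpair
    have : g x - x = fun i => ((a : Fin n → ℤ) i : ℚ) := by
      rw [← hvw, map_add, hgw]
      rw [show g v + w - (v + w) = g v - v by ring, hga]
    intro i
    exact ⟨a i, by rw [this]⟩
  -- (1)
  have part1 : ∀ l : Fin n → ℤ, g (fun i => (l i : ℚ)) ∈ intVecs (Fin n) := by
    intro l
    have hl : (fun i => (l i : ℚ)) ∈ dualLat B := by
      intro v
      exact ⟨l ⬝ᵥ B.mulVec v, castPair B l v⟩
    have h1 := key _ hl
    have h2 : (fun i => (l i : ℚ)) ∈ intVecs (Fin n) := fun i => ⟨l i, rfl⟩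
    have := (intVecs (Fin n)).add_mem h1 h2
    simpa using this
  refine ⟨part1, ?_, key⟩
  -- (2)
  have hdetq : Bq.det ≠ 0 := by
    have : Bq.det = ((B.det : ℤ) : ℚ) := (RingHom.map_det (Int.castRingHom ℚ) B).symm
    rw [this]
    exact_mod_cast hnd
  have hinj : Function.Injective g := by
    intro a b hab
    have h0 : g (a - b) = 0 := by rw [map_sub, hab, sub_self]
    have : a - b = 0 := by
      apply (Matrix.nondegenerate_of_det_ne_zero hdetq).eq_zero_of_ortho
      intro y
      have := hgiso (a - b) y
      rw [h0, zero_dotProduct] at this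
      exact this.symm
    exact sub_eq_zero.mp this
  have hsurj : Function.Surjective g := (LinearMap.injective_iff_surjective).mp hinj
  intro l
  obtain ⟨x, hxg⟩ := hsurj (fun i => (l i : ℚ))
  have hxdual : x ∈ dualLat B := by
    intro v
    obtain ⟨m, hm⟩ : ∃ m : Fin n → ℤ, (fun i => (m i : ℚ)) = g (fun i => (v i : ℚ)) := by
      have h := part1 v
      exact ⟨fun i => (h i).choose, funext fun i => ((h i).choose_spec).symm⟩
    have h1 : x ⬝ᵥ Bq.mulVec (fun i => (v i : ℚ))
        = g x ⬝ᵥ Bq.mulVec (g (fun i => (v i : ℚ))) := (hgiso _ _).symm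
    rw [h1, hxg, ← hm, castPair]
    exact ⟨l ⬝ᵥ B.mulVec m, rfl⟩
  have hxint : x ∈ intVecs (Fin n) := by
    have h1 := key x hxdual
    have h2 : g x ∈ intVecs (Fin n) := by rw [hxg]; exact fun i => ⟨l i, rfl⟩
    have := (intVecs (Fin n)).sub_mem h2 h1
    simpa using this
  refine ⟨fun i => (hxint i).choose, ?_⟩
  have hx' : (fun i => ((hxint i).choose : ℚ)) = x := funext fun i => ((hxint i).choose_spec).symm
  rw [hx', hxg]
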